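/- Let x be an infinite word over a finite alphabet A, and suppose there exist a positive integer k and a syndetic set S ⊆ ℕ such that cl_x(n) < k for every n ∈ S. Let u be a primitive finite word such that u^n is a factor of x for every n ∈ ℕ. Then |u| < k. -/

import Mathlib

/-- `w` occurs in the infinite word `x` at position `m`. -/
def OccursAt {A : Type*} (x : ℕ → A) (w : List A) (m : ℕ) : Prop :=
  w = (List.range w.length).map fun i => x (m + i)

/-- `w` is a factor of the infinite word `x`. -/
def IsFactorOf {A : Type*} (x : ℕ → A) (w : List A) : Prop :=
  ∃ m, OccursAt x w m

/-- `w` is a recurrent factor of `x` : it occurs at infinitely many positions. -/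
def IsRecurrentFactor {A : Type*} (x : ℕ → A) (w : List A) : Prop :=
  ∀ N, ∃ m, N ≤ m ∧ OccursAt x w m

/-- The set of positions at which `u` occurs inside the finite word `w`. -/
def occSet {A : Type*} (u w : List A) : Set ℕ := {i | u <+: w.drop i}

/-- `u` is a border of `w`: nonempty, strictly shorter than `w`,
and both a prefix and a suffix of `w`. -/
def IsBorder {A : Type*} (u w : List A) : Prop :=
  0 < u.length ∧ u.length < w.length ∧ u <+: w ∧ u <:+ w

/-- A finite word is closed if it is a single letter or it has a border
occurring exactly twice in it. -/
def IsClosedWord {A : Type*} (w : List A) : Prop :=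
  w.length = 1 ∨ ∃ u, IsBorder u w ∧ (occSet u w).ncard = 2

/-- A nonempty finite word is open if it is not closed. -/
def IsOpenWord {A : Type*} (w : List A) : Prop :=
  w ≠ [] ∧ ¬ IsClosedWord w

/-- The frontier of a closed word is its longest border. -/
def IsFrontier {A : Type*} (u w : List A) : Prop :=
  IsBorder u w ∧ ∀ v, IsBorder v w → v.length ≤ u.length

/-- number of closed factors of `x` of length `n`. -/
noncomputable def clComp {A : Type*} (x : ℕ → A) (n : ℕ) : ℕ :=
  {w : List A | w.length = n ∧ IsFactorOf x w ∧ IsClosedWord w}.ncard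

/-- number of open factors of `x` of length `n`. -/
noncomputable def opComp {A : Type*} (x : ℕ → A) (n : ℕ) : ℕ :=
  {w : List A | w.length = n ∧ IsFactorOf x w ∧ IsOpenWord w}.ncard

/-- `x` is ultimately periodic: `x = u v v v ⋯` for some `u`, `v` with `v` nonempty,
expressed via: every finite word `u v^n` is a prefix of `x`. -/
def UltPeriodic {A : Type*} (x : ℕ → A) : Prop :=
  ∃ u v : List A, v ≠ [] ∧ ∀ n : ℕ, OccursAt x (u ++ (List.replicate n v).flatten) 0

/-- `S ⊆ ℕ` is syndetic with gaps smaller than `d`: `S ∩ [n, n+d] ≠ ∅` for all `n`. -/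
def SyndeticWithGaps (S : Set ℕ) (d : ℕ) : Prop :=
  ∀ n : ℕ, ∃ m ∈ S, n ≤ m ∧ m ≤ n + d

/-- `S ⊆ ℕ` is syndetic. -/
def Syndetic (S : Set ℕ) : Prop :=
  ∃ d : ℕ, SyndeticWithGaps S d

/-- A nonempty finite word is primitive if it is not an integer power `v^n`,
`n ≥ 2`, of any word. -/
def PrimitiveWord {A : Type*} (u : List A) : Prop :=
  u ≠ [] ∧ ∀ (v : List A) (n : ℕ), 2 ≤ n → u ≠ (List.replicate n v).flatten


namespace PPS
variable {A : Type*}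

/-- window of an infinite word -/
def win (f : ℕ → A) (i n : ℕ) : List A := (List.range n).map fun t => f (i + t)

@[simp] lemma win_length (f : ℕ → A) (i n : ℕ) : (win f i n).length = n := by simp [win]

@[simp] lemma win_getElem (f : ℕ → A) (i n t : ℕ) (ht : t < (win f i n).length) :
    (win f i n)[t] = f (i + t) := by simp [win]

lemma win_append (f : ℕ → A) (i m n : ℕ) :
    win f i (m + n) = win f i m ++ win f (i + m) n := by
  apply List.ext_getElem
  · simp
  · intro t h1 h2
    simp only [win_getElem]
    rcases lt_or_ge t m with h | h
    · rw [List.getElem_append_left (by simpa using h), win_getElem]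
    · rw [List.getElem_append_right (by simpa using h)]
      simp only [win_length, win_getElem]
      congr 1
      omega

lemma win_eq_iff {f : ℕ → A} {a b c : ℕ} :
    win f a c = win f b c ↔ ∀ t < c, f (a + t) = f (b + t) := by
  constructor
  · intro h t ht
    have := congrArg (fun l => l[t]?) h
    simp only [List.getElem?_eq_getElem (by simpa using ht : t < (win f a c).length),
      List.getElem?_eq_getElem (by simpa using ht : t < (win f b c).length),
      win_getElem] at this
    exact Option.some_injective _ this
  · intro h
    apply List.ext_getElem (by simp)
    intro t h1 h2
    simp only [win_getElem]
    exact h t (by simpa using h1)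

lemma per_mul {f : ℕ → A} {P : ℕ} (h : ∀ m, f (m + P) = f m) :
    ∀ c m, f (m + P * c) = f m := by
  intro c
  induction c with
  | zero => simp
  | succ c ih =>
    intro m
    have : m + P * (c + 1) = (m + P * c) + P := by ring
    rw [this, h, ih]

lemma per_mod {f : ℕ → A} {a b : ℕ} (ha : ∀ m, f (m + a) = f m) (hb : ∀ m, f (m + b) = f m) :
    ∀ m, f (m + a % b) = f m := by
  intro m
  have h1 : m + a = (m + a % b) + b * (a / b) := by
    rw [Nat.add_assoc]
    congr 1
    exact (Nat.mod_add_div a b).symm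
  calc f (m + a % b) = f ((m + a % b) + b * (a / b)) := (per_mul hb _ _).symm
    _ = f (m + a) := by rw [← h1]
    _ = f m := ha m

lemma per_gcd {f : ℕ → A} : ∀ a b : ℕ, (∀ m, f (m + a) = f m) → (∀ m, f (m + b) = f m) →
    ∀ m, f (m + Nat.gcd a b) = f m := by
  intro a b
  induction a, b using Nat.gcd.induction with
  | H0 b => intro _ hb; simpa using hb
  | H1 a b ha ih =>
    intro h1 h2
    rw [Nat.gcd_rec]
    exact ih (per_mod h2 h1) h1

lemma per_extend {f : ℕ → A} {P d i W : ℕ} (hP : 0 < P) (hPW : P ≤ W)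
    (hper : ∀ m, f (m + P) = f m)
    (hwin : ∀ t, i ≤ t → t < i + W → f (t + d) = f t) :
    ∀ m, f (m + d) = f m := by
  have key : ∀ s, i ≤ s → f (s + d) = f s := by
    intro s hs
    set r := i + (s - i) % P with hr
    set q := (s - i) / P with hq
    have h0 : (s - i) % P + P * q = s - i := Nat.mod_add_div _ _
    have hrs : r + P * q = s := by omega
    have hrW : r < i + W := by
      have := Nat.mod_lt (s - i) hP
      omega
    calc f (s + d) = f (r + d + P * q) := by rw [show s + d = r + d + P * q by omega]
      _ = f (r + d) := per_mul hper _ _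
      _ = f r := hwin r (by omega) hrW
      _ = f (r + P * q) := (per_mul hper _ _).symm
      _ = f s := by rw [hrs]
  intro m
  have hi : i ≤ P * i := Nat.le_mul_of_pos_left i hP
  have h1 : f (m + P * i + d) = f (m + P * i) := key _ (by omega)
  have h2 : f (m + d + P * i) = f (m + d) := per_mul hper _ _
  have h3 : f (m + P * i) = f m := per_mul hper _ _
  rw [show m + d + P * i = m + P * i + d by omega] at h2
  rw [← h2, h1, h3]




variable {A : Type*}

/-- the periodic infinite word `u^ω` -/
def pf (u : List A) (h : 0 < u.length) (m : ℕ) : A :=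
  u.get ⟨m % u.length, Nat.mod_lt _ h⟩

lemma pf_period (u : List A) (h : 0 < u.length) (m : ℕ) :
    pf u h (m + u.length) = pf u h m := by
  simp [pf, Nat.add_mod_right]

lemma pf_eq_get (u : List A) (h : 0 < u.length) (m : ℕ) (hm : m < u.length) :
    pf u h m = u.get ⟨m, hm⟩ := by
  simp [pf, Nat.mod_eq_of_lt hm]

@[simp] lemma flatten_replicate_length (v : List A) (n : ℕ) :
    ((List.replicate n v).flatten).length = n * v.length := by
  induction n with
  | zero => simp
  | succ n ih => rw [List.replicate_succ, List.flatten_cons, List.length_append, ih]; ring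

lemma flatten_replicate_getElem (v : List A) (hv : 0 < v.length) (n m : ℕ)
    (hm : m < ((List.replicate n v).flatten).length) :
    ((List.replicate n v).flatten)[m] = v[m % v.length]'(Nat.mod_lt _ hv) := by
  induction n generalizing m with
  | zero => simp at hm
  | succ n ih =>
    simp only [List.replicate_succ, List.flatten_cons] at hm ⊢
    rcases lt_or_ge m v.length with h | h
    · rw [List.getElem_append_left h]
      congr 1
      exact (Nat.mod_eq_of_lt h).symm
    · rw [List.getElem_append_right h]
      rw [ih (m - v.length) (by simp only [List.length_append, flatten_replicate_length] at hm ⊢; omega)]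
      congr 1
      conv_rhs => rw [show m = (m - v.length) + v.length by omega]
      rw [Nat.add_mod_right]

/-- a primitive word's periodic extension has no global period smaller than `|u|`. -/
lemma prim_no_small_period (u : List A) (hu : PrimitiveWord u) (h : 0 < u.length)
    (d : ℕ) (hd : 0 < d) (hdL : d < u.length)
    (hper : ∀ m, pf u h (m + d) = pf u h m) : False := by
  set L := u.length with hL
  set g := Nat.gcd d L with hg
  have hgper : ∀ m, pf u h (m + g) = pf u h m :=
    per_gcd d L hper (pf_period u h)
  have hgpos : 0 < g := Nat.gcd_pos_of_pos_left _ hd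
  have hgdvd : g ∣ L := Nat.gcd_dvd_right d L
  have hgL : g < L := lt_of_le_of_lt (Nat.le_of_dvd (by omega) (Nat.gcd_dvd_left d L)) hdL
  -- u = (u.take g)^(L/g)
  have hmod : ∀ m, pf u h m = pf u h (m % g) := by
    intro m
    conv_lhs => rw [show m = m % g + g * (m / g) from by rw [Nat.mod_add_div]]
    exact per_mul hgper _ _
  have htake : (u.take g).length = g := by simp; omega
  have key : u = (List.replicate (L / g) (u.take g)).flatten := by
    apply List.ext_getElem
    · simp [htake, Nat.div_mul_cancel hgdvd]; exact hL.symm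
    · intro m h1 h2
      rw [flatten_replicate_getElem _ (by omega) _ _ h2]
      have hmg : m % (u.take g).length < g := by rw [htake]; exact Nat.mod_lt _ hgpos
      rw [List.getElem_take]
      have e1 : u[m] = pf u h m := (pf_eq_get u h m h1).symm
      have e2 : u[m % (u.take g).length]'(by omega) = pf u h (m % (u.take g).length) :=
        (pf_eq_get u h _ (by omega)).symm
      rw [e1, e2, hmod m, htake]
  exact hu.2 (u.take g) (L / g) (by
    have := Nat.div_mul_cancel hgdvd
    rcases Nat.lt_or_ge (L / g) 2 with h2 | h2
    · interval_cases hq : (L / g) <;> omega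
    · exact h2) key
end PPS

namespace PPS

@[simp] lemma win_take {A : Type*} (f : ℕ → A) (i n k : ℕ) :
    (win f i n).take k = win f i (min k n) := by
  simp [win, ← List.map_take, List.take_range]

end PPS

theorem primitive_period_short_of_closed_bounded
    {A : Type*} [Fintype A] (x : ℕ → A) (k : ℕ) (hk : 0 < k)
    (S : Set ℕ) (hS : Syndetic S) (hcl : ∀ n ∈ S, clComp x n < k)
    (u : List A) (hu : PrimitiveWord u)
    (hpow : ∀ n : ℕ, IsFactorOf x (List.replicate n u).flatten) :
    u.length < k := by
  classical
  have hne : u ≠ [] := hu.1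
  have hL : 0 < u.length := List.length_pos_iff.mpr hne
  set L := u.length with hLdef
  set p : ℕ → A := PPS.pf u hL with hp
  obtain ⟨dS, hdS⟩ := hS
  obtain ⟨n, hnS, hn1, hn2⟩ := hdS (2 * L)
  have h2L : 2 * L ≤ n := hn1
  have pper : ∀ m, p (m + L) = p m := PPS.pf_period u hL
  have nosmall : ∀ d, 0 < d → d < L → (∀ m, p (m + d) = p m) → False :=
    fun d hd hdL hper => PPS.prim_no_small_period u hu hL d hd hdL hper
  -- if p has period j on a window of width ≥ L, it has global period j
  have winper : ∀ i j Wd, L ≤ Wd → (∀ t, t < Wd → p (i + t) = p (i + j + t)) →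
      ∀ m, p (m + j) = p m := by
    intro i j Wd hWd hyp
    refine PPS.per_extend (i := i) hL hWd pper ?_
    intro t h1 h2
    have h3 := hyp (t - i) (by omega)
    rw [show i + (t - i) = t by omega, show i + j + (t - i) = t + j by omega] at h3
    exact h3.symm
  -- factors of p are factors of x
  obtain ⟨m0, hm0⟩ := hpow (n + 1)
  have hx : ∀ t, t < (n + 1) * L → x (m0 + t) = p t := by
    intro t ht
    have hlen : ((List.replicate (n + 1) u).flatten).length = (n + 1) * L :=
      PPS.flatten_replicate_length u (n + 1)
    have h4 : ((List.replicate (n + 1) u).flatten)[t]'(by omega) =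
        ((List.range ((List.replicate (n + 1) u).flatten).length).map
          (fun i => x (m0 + i)))[t]'(by simpa [hlen] using ht) := by
      exact List.getElem_of_eq hm0 _
    rw [PPS.flatten_replicate_getElem u hL (n + 1) t (by omega)] at h4
    simp only [List.getElem_map, List.getElem_range] at h4
    rw [hp]
    rw [← h4]
    simp [PPS.pf, List.get_eq_getElem]
  have hfac : ∀ i, i < L → IsFactorOf x (PPS.win p i n) := by
    intro i hi
    have hnL : n ≤ n * L := Nat.le_mul_of_pos_right n hL
    have hmul : (n + 1) * L = n * L + L := by ring
    refine ⟨m0 + i, ?_⟩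
    show PPS.win p i n = (List.range (PPS.win p i n).length).map fun t => x (m0 + i + t)
    rw [PPS.win_length]
    apply List.ext_getElem (by simp [PPS.win])
    intro t h1 h2
    have ht : t < n := by simpa using h1
    simp only [List.getElem_map, List.getElem_range, PPS.win_getElem]
    rw [show m0 + i + t = m0 + (i + t) by omega, hx (i + t) (by omega)]
  -- window algebra
  have hsplit : ∀ i j, j ≤ n → PPS.win p i n = PPS.win p i j ++ PPS.win p (i + j) (n - j) := by
    intro i j hj
    have h5 := PPS.win_append p i j (n - j)
    rwa [show j + (n - j) = n by omega] at h5
  have hdrop : ∀ i j, j ≤ n → (PPS.win p i n).drop j = PPS.win p (i + j) (n - j) := by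
    intro i j hj
    rw [hsplit i j hj]
    exact List.drop_left' (PPS.win_length p i j)
  have hshift : ∀ i, PPS.win p (i + L) (n - L) = PPS.win p i (n - L) := by
    intro i
    rw [PPS.win_eq_iff]
    intro t ht
    rw [show i + L + t = (i + t) + L by omega]
    exact pper (i + t)
  have hVpre : ∀ i, PPS.win p i (n - L) <+: PPS.win p i n := by
    intro i
    refine ⟨PPS.win p (i + (n - L)) L, ?_⟩
    have h6 := PPS.win_append p i (n - L) L
    rw [show (n - L) + L = n by omega] at h6
    exact h6.symm
  have hVsuf : ∀ i, PPS.win p i (n - L) <:+ PPS.win p i n := by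
    intro i
    refine ⟨PPS.win p i L, ?_⟩
    rw [← hshift i]
    exact (hsplit i L (by omega)).symm
  have hocc : ∀ i, i < L →
      occSet (PPS.win p i (n - L)) (PPS.win p i n) = ({0, L} : Set ℕ) := by
    intro i hi
    ext j
    simp only [occSet, Set.mem_setOf_eq, Set.mem_insert_iff, Set.mem_singleton_iff]
    constructor
    · intro hj
      have hjlen := hj.length_le
      rw [List.length_drop] at hjlen
      simp only [PPS.win_length] at hjlen
      have hjL : j ≤ L := by omega
      rw [hdrop i j (by omega)] at hj
      have heq : PPS.win p i (n - L) = PPS.win p (i + j) (n - L) := by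
        have h7 := List.prefix_iff_eq_take.mp hj
        rw [h7, PPS.win_take]
        congr 1
        simp only [PPS.win_length]
        omega
      rw [PPS.win_eq_iff] at heq
      by_contra hcon
      push_neg at hcon
      exact nosmall j (by omega) (by omega)
        (winper i j (n - L) (by omega) (fun t ht => heq t ht))
    · intro hj
      rcases hj with hj | hj
      · subst hj
        rw [List.drop_zero]
        exact hVpre i
      · subst hj
        rw [hdrop i L (by omega), hshift i]
  have hclosed : ∀ i, i < L → IsClosedWord (PPS.win p i n) := by
    intro i hi
    refine Or.inr ⟨PPS.win p i (n - L), ⟨?_, ?_, hVpre i, hVsuf i⟩, ?_⟩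
    · simp only [PPS.win_length]; omega
    · simp only [PPS.win_length]; omega
    · rw [hocc i hi]
      exact Set.ncard_pair (by omega)
  have hinj : ∀ i j, i < j → j < L → PPS.win p i n ≠ PPS.win p j n := by
    intro i j hij hjL he
    have h8 := PPS.win_eq_iff.mp he
    refine nosmall (j - i) (by omega) (by omega)
      (winper i (j - i) n (by omega) (fun t ht => ?_))
    rw [show i + (j - i) + t = j + t by omega]
    exact h8 t ht
  -- the count
  have hsubset : ↑((Finset.range L).image (fun i => PPS.win p i n)) ⊆
      {w : List A | w.length = n ∧ IsFactorOf x w ∧ IsClosedWord w} := by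
    intro w hw
    simp only [Finset.coe_image, Finset.coe_range, Set.mem_image, Set.mem_Iio] at hw
    obtain ⟨i, hi, rfl⟩ := hw
    exact ⟨PPS.win_length p i n, hfac i hi, hclosed i hi⟩
  have hfin : {w : List A | w.length = n ∧ IsFactorOf x w ∧ IsClosedWord w}.Finite :=
    (List.finite_length_eq A n).subset (fun w hw => hw.1)
  have hcard : ((Finset.range L).image (fun i => PPS.win p i n)).card = L := by
    rw [Finset.card_image_of_injOn, Finset.card_range]
    intro i hi j hj he
    simp only [Finset.coe_range, Set.mem_Iio] at hi hj
    by_contra hne'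
    rcases Nat.lt_or_ge i j with h | h
    · exact hinj i j h hj he
    · exact hinj j i (by omega) hi he.symm
  have hle : L ≤ clComp x n := by
    rw [clComp, ← hcard, ← Set.ncard_coe_finset]
    exact Set.ncard_le_ncard hsubset hfin
  exact lt_of_le_of_lt hle (hcl n hnS)
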